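/- Let P be a program over 𝒰 and A, B ⊆ 𝒰. If P satisfies Δʳ (for A, B) and does not satisfy criterion Ω_{A,B}, then P is B-relativized A-simplifiable. -/

import Mathlib

/-- An extended rule over a type of atoms: head, positive body, negative body,
double-negated body. -/
structure ASPRule (Atom : Type) where
  head : Finset Atom
  pos : Finset Atom
  neg : Finset Atom
  nneg : Finset Atom
deriving DecidableEq

/-- A program is a finite set of rules. -/
abbrev ASPProgram (Atom : Type) [DecidableEq Atom] := Finset (ASPRule Atom)

section Defs

variable {Atom : Type} [DecidableEq Atom] [Fintype Atom]

/-- A rule is over `S` if all its atoms lie in `S`. -/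
def ruleOver (r : ASPRule Atom) (S : Finset Atom) : Prop :=
  r.head ⊆ S ∧ r.pos ⊆ S ∧ r.neg ⊆ S ∧ r.nneg ⊆ S

/-- A program is over `S` if all its rules are over `S`. -/
def progOver (P : ASPProgram Atom) (S : Finset Atom) : Prop :=
  ∀ r ∈ P, ruleOver r S

/-- `I` satisfies (is a model of) rule `r`. -/
def satRule (I : Finset Atom) (r : ASPRule Atom) : Prop :=
  ((r.head ∪ r.neg) ∩ I).Nonempty ∨ ¬ (r.pos ∪ r.nneg ⊆ I)

/-- `I` is a model of program `P`. -/
def sat (I : Finset Atom) (P : ASPProgram Atom) : Prop :=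
  ∀ r ∈ P, satRule I r

/-- The GL-reduct `P^I`. -/
def reduct (P : ASPProgram Atom) (I : Finset Atom) : ASPProgram Atom :=
  (P.filter (fun r => r.neg ∩ I = ∅ ∧ r.nneg ⊆ I)).image
    (fun r => ⟨r.head, r.pos, ∅, ∅⟩)

/-- The answer sets of `P`: minimal models of the reduct. -/
def AS (P : ASPProgram Atom) : Set (Finset Atom) :=
  {I | sat I (reduct P I) ∧ ∀ J ⊂ I, ¬ sat J (reduct P I)}

/-- Projection of a program onto `𝒰 ∖ A`: rules with a head or negative-body atom
from `A` are dropped; in the remaining rules the atoms of `A` are removed from the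
positive and double-negated bodies. -/
def projAway (P : ASPProgram Atom) (A : Finset Atom) : ASPProgram Atom :=
  (P.filter (fun r => r.neg ∩ A = ∅ ∧ r.head ∩ A = ∅)).image
    (fun r => ⟨r.head, r.pos \ A, r.neg, r.nneg \ A⟩)

/-- `R` is `A`-separated: a union of a program over `𝒰 ∖ A` and a program over `A`. -/
def ASeparated (R : ASPProgram Atom) (A : Finset Atom) : Prop :=
  ∃ R₁ R₂ : ASPProgram Atom, R = R₁ ∪ R₂ ∧ progOver R₁ Aᶜ ∧ progOver R₂ A

/-- The defining equation of a (strong) `A`-simplification of `P` relative to `B`: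
`AS(P ∪ R)_{|Ā} = AS(Q ∪ R_{|Ā})` for every `A`-separated program `R` over `B`. -/
def SimpEq (P : ASPProgram Atom) (A B : Finset Atom) (Q : ASPProgram Atom) : Prop :=
  ∀ R : ASPProgram Atom, progOver R B → ASeparated R A →
    (fun I => I \ A) '' AS (P ∪ R) = AS (Q ∪ projAway R A)

/-- The SE-models of `P`. -/
def SE (P : ASPProgram Atom) : Set (Finset Atom × Finset Atom) :=
  {p | p.1 ⊆ p.2 ∧ sat p.2 P ∧ sat p.1 (reduct P p.2)}

/-- The (relativized) `B`-SE-models of `P`. -/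
def SEB (B : Finset Atom) (P : ASPProgram Atom) : Set (Finset Atom × Finset Atom) :=
  {p | (p.1 = p.2 ∨ p.1 ⊂ p.2 ∩ B) ∧ sat p.2 P ∧
    (∀ Y' ⊂ p.2, Y' ∩ B = p.2 ∩ B → ¬ sat Y' (reduct P p.2)) ∧
    (p.1 ⊂ p.2 → ∃ X' ⊆ p.2, X' ∩ B = p.1 ∧ sat X' (reduct P p.2))}

/-- `SE^{A₁,A₂}(P)`: the `A₂`-SE-models `⟨X,Y⟩` of `P` with `Y ⊆ A₁`. -/
def SERel (P : ASPProgram Atom) (A₁ A₂ : Finset Atom) : Set (Finset Atom × Finset Atom) :=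
  {p | p ∈ SEB A₂ P ∧ p.2 ⊆ A₁}

/-- `P` satisfies `Δʳ` for `A`, `B`. -/
def DeltaR (P : ASPProgram Atom) (A B : Finset Atom) : Prop :=
  (∀ Y : Finset Atom, (Y, Y) ∈ SEB B P → A ∩ B ⊆ Y) ∧
  (∀ X Y : Finset Atom, (X, Y) ∈ SE P → (Y, Y) ∈ SEB B P → X \ A = Y \ A → X = Y) ∧
  (∀ X Y : Finset Atom, (X, Y) ∈ SEB B P → (X ∪ (Y ∩ A ∩ B), Y) ∈ SEB B P)

/-- The family `𝓡^Y_{⟨P,A,B⟩}`. -/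
def RFam (P : ASPProgram Atom) (A B Y : Finset Atom) : Set (Set (Finset Atom)) :=
  {S | ∃ A' ⊆ A, (Y ∪ A', Y ∪ A') ∈ SEB B P ∧
    S = {Z | ∃ X : Finset Atom, (X, Y ∪ A') ∈ SEB B P ∧ Z = X \ A}}

/-- `P` satisfies criterion `Ω_{A,B}`: for some `Y ⊆ 𝒰 ∖ A` the family
`𝓡^Y_{⟨P,A,B⟩}` is non-empty and has no `⊆`-least element. -/
def OmegaCrit (P : ASPProgram Atom) (A B : Finset Atom) : Prop :=
  ∃ Y : Finset Atom, Y ⊆ Aᶜ ∧ (RFam P A B Y).Nonempty ∧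
    ¬ ∃ S ∈ RFam P A B Y, ∀ T ∈ RFam P A B Y, S ⊆ T

/-- `⋂ 𝓡^Y_{⟨P,A,B⟩}`, taken to be `∅` when the family is empty. -/
def RInter (P : ASPProgram Atom) (A B Y : Finset Atom) : Set (Finset Atom) :=
  {X | (RFam P A B Y).Nonempty ∧ ∀ S ∈ RFam P A B Y, X ∈ S}

/-- The `A`-`B`-SE-models `SE^B_A(P)` of `P`. -/
def SEBA (P : ASPProgram Atom) (A B : Finset Atom) : Set (Finset Atom × Finset Atom) :=
  {p | ∃ Y : Finset Atom, (Y, Y) ∈ SEB B P ∧ p = (Y \ A, Y \ A)} ∪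
  {p | ∃ X Y : Finset Atom, (X, Y) ∈ SEB B P ∧ X ⊂ Y ∧
    (∀ Y' : Finset Atom, (Y', Y') ∈ SEB B P → Y' \ A = Y \ A →
      ∃ X' : Finset Atom, (X', Y') ∈ SEB B P ∧ X' \ A = X \ A) ∧
    p = (X \ A, Y \ A)}

end Defs


section Helpers
variable {Atom : Type} [DecidableEq Atom] [Fintype Atom]

lemma mem_congr {S I J : Finset Atom} (h : I ∩ S = J ∩ S) {a : Atom} (ha : a ∈ S) :
    a ∈ I ↔ a ∈ J := by
  constructor <;> intro h'
  · have h2 : a ∈ J ∩ S := h ▸ Finset.mem_inter.mpr ⟨h', ha⟩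
    exact (Finset.mem_inter.mp h2).1
  · have h2 : a ∈ I ∩ S := by rw [h]; exact Finset.mem_inter.mpr ⟨h', ha⟩
    exact (Finset.mem_inter.mp h2).1

lemma satRule_congr {r : ASPRule Atom} {S I J : Finset Atom} (hr : ruleOver r S)
    (h : I ∩ S = J ∩ S) : satRule I r ↔ satRule J r := by
  obtain ⟨h1, h2, h3, h4⟩ := hr
  unfold satRule
  have hm : ∀ a ∈ r.head ∪ r.neg, (a ∈ I ↔ a ∈ J) := by
    intro a ha
    rcases Finset.mem_union.mp ha with ha | ha
    · exact mem_congr h (h1 ha)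
    · exact mem_congr h (h3 ha)
  have hs : ∀ a ∈ r.pos ∪ r.nneg, (a ∈ I ↔ a ∈ J) := by
    intro a ha
    rcases Finset.mem_union.mp ha with ha | ha
    · exact mem_congr h (h2 ha)
    · exact mem_congr h (h4 ha)
  constructor <;> rintro (⟨a, ha⟩ | hns)
  · rw [Finset.mem_inter] at ha
    exact Or.inl ⟨a, Finset.mem_inter.mpr ⟨ha.1, (hm a ha.1).mp ha.2⟩⟩
  · exact Or.inr fun hsub => hns fun a ha => (hs a ha).mpr (hsub ha)
  · rw [Finset.mem_inter] at ha
    exact Or.inl ⟨a, Finset.mem_inter.mpr ⟨ha.1, (hm a ha.1).mpr ha.2⟩⟩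
  · exact Or.inr fun hsub => hns fun a ha => (hs a ha).mp (hsub ha)

lemma sat_congr {T : ASPProgram Atom} {S I J : Finset Atom} (hT : progOver T S)
    (h : I ∩ S = J ∩ S) : sat I T ↔ sat J T := by
  constructor <;> intro hs r hr
  · exact (satRule_congr (hT r hr) h).mp (hs r hr)
  · exact (satRule_congr (hT r hr) h).mpr (hs r hr)

lemma mem_reduct {P : ASPProgram Atom} {I : Finset Atom} {r' : ASPRule Atom} :
    r' ∈ reduct P I ↔ ∃ r ∈ P, r.neg ∩ I = ∅ ∧ r.nneg ⊆ I ∧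
      r' = ⟨r.head, r.pos, ∅, ∅⟩ := by
  simp only [reduct, Finset.mem_image, Finset.mem_filter]
  constructor
  · rintro ⟨r, ⟨hr, h1, h2⟩, rfl⟩; exact ⟨r, hr, h1, h2, rfl⟩
  · rintro ⟨r, hr, h1, h2, rfl⟩; exact ⟨r, ⟨hr, h1, h2⟩, rfl⟩

lemma sat_reduct_self {P : ASPProgram Atom} {I : Finset Atom} :
    sat I (reduct P I) ↔ sat I P := by
  constructor
  · intro hs r hr
    by_cases hc : r.neg ∩ I = ∅ ∧ r.nneg ⊆ I
    · have hmem : (⟨r.head, r.pos, ∅, ∅⟩ : ASPRule Atom) ∈ reduct P I :=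
        mem_reduct.mpr ⟨r, hr, hc.1, hc.2, rfl⟩
      rcases hs _ hmem with ⟨a, ha⟩ | hns
      · simp only [Finset.union_empty, Finset.mem_inter] at ha
        exact Or.inl ⟨a, Finset.mem_inter.mpr ⟨Finset.mem_union_left _ ha.1, ha.2⟩⟩
      · simp only [Finset.union_empty] at hns
        exact Or.inr fun hsub => hns fun a ha => hsub (Finset.mem_union_left _ ha)
    · rw [Decidable.not_and_iff_or_not] at hc
      rcases hc with hc | hc
      · obtain ⟨a, ha⟩ := Finset.nonempty_iff_ne_empty.mpr hc
        rw [Finset.mem_inter] at ha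
        exact Or.inl ⟨a, Finset.mem_inter.mpr ⟨Finset.mem_union_right _ ha.1, ha.2⟩⟩
      · exact Or.inr fun hsub => hc fun a ha => hsub (Finset.mem_union_right _ ha)
  · intro hs r' hr'
    obtain ⟨r, hr, h1, h2, rfl⟩ := mem_reduct.mp hr'
    rcases hs r hr with ⟨a, ha⟩ | hns
    · rw [Finset.mem_inter, Finset.mem_union] at ha
      rcases ha.1 with hh | hh
      · exact Or.inl ⟨a, by simp only [Finset.union_empty, Finset.mem_inter]; exact ⟨hh, ha.2⟩⟩
      · exact absurd (Finset.mem_inter.mpr ⟨hh, ha.2⟩) (by simp [h1])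
    · refine Or.inr fun hsub => hns fun a ha => ?_
      rcases Finset.mem_union.mp ha with hh | hh
      · exact hsub (by simpa using hh)
      · exact h2 hh

lemma reduct_union {P R : ASPProgram Atom} {I : Finset Atom} :
    reduct (P ∪ R) I = reduct P I ∪ reduct R I := by
  unfold reduct; rw [Finset.filter_union, Finset.image_union]

lemma sat_union {P R : ASPProgram Atom} {I : Finset Atom} :
    sat I (P ∪ R) ↔ sat I P ∧ sat I R := by
  unfold sat; simp only [Finset.mem_union, or_imp, forall_and]

lemma sat_anti {P R : ASPProgram Atom} {I : Finset Atom} (h : P ⊆ R) (hs : sat I R) :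
    sat I P := fun r hr => hs r (h hr)

lemma reduct_mono {P R : ASPProgram Atom} {I : Finset Atom} (h : P ⊆ R) :
    reduct P I ⊆ reduct R I := by
  intro r' hr'
  obtain ⟨r, hr, h1, h2, rfl⟩ := mem_reduct.mp hr'
  exact mem_reduct.mpr ⟨r, h hr, h1, h2, rfl⟩

lemma reduct_congr {T : ASPProgram Atom} {S I J : Finset Atom} (hT : progOver T S)
    (h : I ∩ S = J ∩ S) : reduct T I = reduct T J := by
  unfold reduct
  congr 1
  apply Finset.filter_congr
  intro r hr
  obtain ⟨_, _, h3, h4⟩ := hT r hr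
  have hneg : r.neg ∩ I = r.neg ∩ J := by
    ext a; simp only [Finset.mem_inter]
    exact and_congr_right fun ha => mem_congr h (h3 ha)
  have hnneg : (r.nneg ⊆ I) ↔ (r.nneg ⊆ J) := by
    constructor <;> intro hsub a ha
    · exact (mem_congr h (h4 ha)).mp (hsub ha)
    · exact (mem_congr h (h4 ha)).mpr (hsub ha)
  rw [hneg, hnneg]

lemma progOver_reduct {T : ASPProgram Atom} {S I : Finset Atom} (hT : progOver T S) :
    progOver (reduct T I) S := by
  intro r' hr'
  obtain ⟨r, hr, _, _, rfl⟩ := mem_reduct.mp hr'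
  obtain ⟨h1, h2, _, _⟩ := hT r hr
  exact ⟨h1, h2, Finset.empty_subset _, Finset.empty_subset _⟩

lemma AS_sub {T : ASPProgram Atom} {S I : Finset Atom} (hT : progOver T S)
    (hI : I ∈ AS T) : I ⊆ S := by
  by_contra hns
  have hJ : I ∩ S ⊂ I := by
    refine ⟨Finset.inter_subset_left, fun hsub => hns fun a ha => ?_⟩
    exact (Finset.mem_inter.mp (hsub ha)).2
  have hsat : sat (I ∩ S) (reduct T I) := by
    refine (sat_congr (progOver_reduct hT) ?_).mp hI.1
    rw [Finset.inter_assoc, Finset.inter_self]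
  exact hI.2 _ hJ hsat

end Helpers

section Main
set_option linter.unusedSectionVars false
variable {Atom : Type} [DecidableEq Atom] [Fintype Atom]

/-- Membership in SEB unfolded. -/
lemma mem_SEB {B : Finset Atom} {P : ASPProgram Atom} {X Y : Finset Atom} :
    (X, Y) ∈ SEB B P ↔ (X = Y ∨ X ⊂ Y ∩ B) ∧ sat Y P ∧
      (∀ Y' ⊂ Y, Y' ∩ B = Y ∩ B → ¬ sat Y' (reduct P Y)) ∧
      (X ⊂ Y → ∃ X' ⊆ Y, X' ∩ B = X ∧ sat X' (reduct P Y)) := Iff.rfl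

/-- Lemma A: characterization of answer sets of `P ∪ R` for `R` over `B`. -/
lemma lemA {P R : ASPProgram Atom} {B : Finset Atom} (hR : progOver R B) (Y : Finset Atom) :
    Y ∈ AS (P ∪ R) ↔ (Y, Y) ∈ SEB B P ∧ sat Y R ∧
      ∀ X, (X, Y) ∈ SEB B P → X ⊂ Y ∩ B → ¬ sat X (reduct R Y) := by
  have hRred : progOver (reduct R Y) B := progOver_reduct hR
  constructor
  · rintro ⟨hsat, hmin⟩
    rw [reduct_union, sat_union] at hsat
    have hYP : sat Y P := sat_reduct_self.mp hsat.1
    have hYR : sat Y R := sat_reduct_self.mp hsat.2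
    have hYY : (Y, Y) ∈ SEB B P := by
      refine mem_SEB.mpr ⟨Or.inl rfl, hYP, ?_, fun h => absurd h (lt_irrefl Y)⟩
      intro Y' hY' hYB hsatY'
      have hsatR : sat Y' (reduct R Y) := (sat_congr hRred hYB).mpr hsat.2
      exact hmin Y' hY' (by rw [reduct_union, sat_union]; exact ⟨hsatY', hsatR⟩)
    refine ⟨hYY, hYR, fun X hX hss hsatX => ?_⟩
    have hXY : X ⊂ Y := lt_of_lt_of_le hss Finset.inter_subset_left
    obtain ⟨X', hX'Y, hX'B, hX'sat⟩ := (mem_SEB.mp hX).2.2.2 hXY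
    have hXB : X ⊆ B := (le_of_lt hss).trans Finset.inter_subset_right
    have hX'satR : sat X' (reduct R Y) := by
      refine (sat_congr hRred ?_).mpr hsatX
      rw [hX'B, Finset.inter_eq_left.mpr hXB]
    have hX'ss : X' ⊂ Y := by
      refine ⟨hX'Y, fun hle => ?_⟩
      have : Y ∩ B ⊆ X := hX'B ▸ Finset.inter_subset_inter_right hle
      exact hss.2 this
    exact hmin X' hX'ss (by rw [reduct_union, sat_union]; exact ⟨hX'sat, hX'satR⟩)
  · rintro ⟨hYY, hYR, hnobad⟩
    obtain ⟨_, hYP, hii, _⟩ := mem_SEB.mp hYY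
    constructor
    · rw [reduct_union, sat_union]
      exact ⟨sat_reduct_self.mpr hYP, sat_reduct_self.mpr hYR⟩
    · intro J hJ hsatJ
      rw [reduct_union, sat_union] at hsatJ
      by_cases hJB : J ∩ B = Y ∩ B
      · exact hii J hJ hJB hsatJ.1
      · have hJBss : J ∩ B ⊂ Y ∩ B :=
          ⟨Finset.inter_subset_inter_right (le_of_lt hJ), fun h => hJB (le_antisymm (Finset.inter_subset_inter_right (le_of_lt hJ)) h)⟩
        have hX : (J ∩ B, Y) ∈ SEB B P := by
          refine mem_SEB.mpr ⟨Or.inr hJBss, hYP, hii, fun _ => ⟨J, le_of_lt hJ, rfl, hsatJ.1⟩⟩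
        refine hnobad _ hX hJBss ?_
        refine (sat_congr hRred ?_).mp hsatJ.2
        rw [Finset.inter_assoc, Finset.inter_self]

/-- No self-obstruction: a strict B-SE-model cannot have the same A-projection as Y. -/
lemma noSelf {P : ASPProgram Atom} {A B : Finset Atom} (h1 : DeltaR P A B)
    {X Y : Finset Atom} (hY : (Y, Y) ∈ SEB B P) (hX : (X, Y) ∈ SEB B P)
    (hss : X ⊂ Y ∩ B) : X \ A ≠ Y \ A := by
  intro heq
  have hXY : X ⊂ Y := lt_of_lt_of_le hss Finset.inter_subset_left
  obtain ⟨X', hX'Y, hX'B, hX'sat⟩ := (mem_SEB.mp hX).2.2.2 hXY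
  have hYP : sat Y P := (mem_SEB.mp hY).2.1
  have hX'dA : X' \ A = Y \ A := by
    apply le_antisymm (Finset.sdiff_subset_sdiff hX'Y le_rfl)
    rw [← heq, ← hX'B]
    exact Finset.sdiff_subset_sdiff Finset.inter_subset_left le_rfl
  have hX'eq : X' = Y := h1.2.1 X' Y ⟨hX'Y, hYP, hX'sat⟩ hY hX'dA
  rw [hX'eq] at hX'B
  exact hss.2 (hX'B ▸ le_rfl)

/-- Hat lemma: close a strict B-SE-model under `A ∩ B`. -/
lemma hatLemma {P : ASPProgram Atom} {A B : Finset Atom} (h1 : DeltaR P A B)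
    {X Y : Finset Atom} (hY : (Y, Y) ∈ SEB B P) (hX : (X, Y) ∈ SEB B P)
    (hss : X ⊂ Y ∩ B) :
    (X ∪ A ∩ B, Y) ∈ SEB B P ∧ X ∪ A ∩ B ⊂ Y ∩ B ∧ (X ∪ A ∩ B) \ A = X \ A := by
  have hAB : A ∩ B ⊆ Y := h1.1 Y hY
  have hYAB : Y ∩ A ∩ B = A ∩ B := by
    rw [Finset.inter_assoc]
    exact Finset.inter_eq_right.mpr hAB
  have hhat : (X ∪ A ∩ B, Y) ∈ SEB B P := by
    have := h1.2.2 X Y hX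
    rwa [hYAB] at this
  have hdA : (X ∪ A ∩ B) \ A = X \ A := by
    rw [Finset.union_sdiff_distrib]
    have : (A ∩ B) \ A = ∅ := by
      rw [Finset.sdiff_eq_empty_iff_subset]; exact Finset.inter_subset_left
    rw [this, Finset.union_empty]
  refine ⟨hhat, ?_, hdA⟩
  rcases (mem_SEB.mp hhat).1 with heq | hss'
  · exfalso
    apply noSelf h1 hY hX hss
    rw [← hdA, heq]
  · exact hss'

lemma mem_RFam_self {P : ASPProgram Atom} {A B Y : Finset Atom}
    (hY : (Y, Y) ∈ SEB B P) :
    {Z | ∃ X, (X, Y) ∈ SEB B P ∧ Z = X \ A} ∈ RFam P A B (Y \ A) := by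
  refine ⟨Y ∩ A, Finset.inter_subset_right, ?_, ?_⟩
  · rw [Finset.sdiff_union_inter]; exact hY
  · rw [Finset.sdiff_union_inter]

lemma RFam_elem {P : ASPProgram Atom} {A B Z : Finset Atom} (hZ : Z ∩ A = ∅)
    {S : Set (Finset Atom)} (hS : S ∈ RFam P A B Z) :
    Z ∈ S ∧ ∀ W ∈ S, W ⊆ Z := by
  obtain ⟨A', hA'A, htot, rfl⟩ := hS
  have hZA : Z \ A = Z := by
    rw [Finset.sdiff_eq_self_iff_disjoint, Finset.disjoint_iff_inter_eq_empty]; exact hZ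
  have hproj : (Z ∪ A') \ A = Z := by
    rw [Finset.union_sdiff_distrib, hZA, Finset.sdiff_eq_empty_iff_subset.mpr hA'A,
      Finset.union_empty]
  constructor
  · exact ⟨Z ∪ A', htot, hproj.symm⟩
  · rintro W ⟨X, hX, rfl⟩
    rcases (mem_SEB.mp hX).1 with rfl | hss
    · rw [hproj]
    · calc X \ A ⊆ (Z ∪ A') \ A :=
            Finset.sdiff_subset_sdiff (hss.1.trans Finset.inter_subset_left) le_rfl
        _ = Z := hproj

open Classical in
/-- The canonical simplification program built from a per-context model family. -/
noncomputable def canonQ (A : Finset Atom) (Mod : Finset Atom → Set (Finset Atom)) :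
    ASPProgram Atom :=
  ((Aᶜ.powerset ×ˢ Aᶜ.powerset).filter (fun p => p.2 ∉ Mod p.1)).image
    (fun p => ⟨Aᶜ \ p.2, p.2, Aᶜ \ p.1, p.1⟩)

lemma mem_canonQ {A : Finset Atom} {Mod : Finset Atom → Set (Finset Atom)}
    {r : ASPRule Atom} : r ∈ canonQ A Mod ↔
    ∃ Z M : Finset Atom, Z ⊆ Aᶜ ∧ M ⊆ Aᶜ ∧ M ∉ Mod Z ∧
      r = ⟨Aᶜ \ M, M, Aᶜ \ Z, Z⟩ := by
  classical
  unfold canonQ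
  simp only [Finset.mem_image, Finset.mem_filter, Finset.mem_product, Finset.mem_powerset]
  constructor
  · rintro ⟨⟨Z, M⟩, ⟨⟨hZ, hM⟩, hnm⟩, rfl⟩
    exact ⟨Z, M, hZ, hM, by convert hnm, rfl⟩
  · rintro ⟨Z, M, hZ, hM, hnm, rfl⟩
    exact ⟨(Z, M), ⟨⟨hZ, hM⟩, by convert hnm⟩, rfl⟩

lemma progOver_canonQ {A : Finset Atom} {Mod : Finset Atom → Set (Finset Atom)} :
    progOver (canonQ A Mod) Aᶜ := by
  intro r hr
  obtain ⟨Z, M, hZ, hM, _, rfl⟩ := mem_canonQ.mp hr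
  exact ⟨Finset.sdiff_subset, hM, Finset.sdiff_subset, hZ⟩

lemma reduct_canonQ_mem {A : Finset Atom} {Mod : Finset Atom → Set (Finset Atom)}
    {I : Finset Atom} {r' : ASPRule Atom} :
    r' ∈ reduct (canonQ A Mod) I ↔
      ∃ M : Finset Atom, M ⊆ Aᶜ ∧ M ∉ Mod (I ∩ Aᶜ) ∧ r' = ⟨Aᶜ \ M, M, ∅, ∅⟩ := by
  rw [mem_reduct]
  constructor
  · rintro ⟨r, hr, hneg, hnneg, rfl⟩
    obtain ⟨Z, M, hZ, hM, hnm, rfl⟩ := mem_canonQ.mp hr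
    have hZeq : Z = I ∩ Aᶜ := by
      apply le_antisymm
      · exact Finset.subset_inter hnneg hZ
      · intro a ha
        rw [Finset.mem_inter] at ha
        by_contra haZ
        have : a ∈ (Aᶜ \ Z) ∩ I := Finset.mem_inter.mpr ⟨Finset.mem_sdiff.mpr ⟨ha.2, haZ⟩, ha.1⟩
        rw [hneg] at this
        exact absurd this (Finset.notMem_empty a)
    exact ⟨M, hM, hZeq ▸ hnm, rfl⟩
  · rintro ⟨M, hM, hnm, rfl⟩
    refine ⟨⟨Aᶜ \ M, M, Aᶜ \ (I ∩ Aᶜ), I ∩ Aᶜ⟩,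
      mem_canonQ.mpr ⟨I ∩ Aᶜ, M, Finset.inter_subset_right, hM, hnm, rfl⟩, ?_, ?_, rfl⟩
    · ext a
      simp only [Finset.mem_inter, Finset.mem_sdiff, Finset.notMem_empty, iff_false, not_and]
      tauto
    · exact Finset.inter_subset_left

lemma sat_reduct_canonQ {A : Finset Atom} {Mod : Finset Atom → Set (Finset Atom)}
    {I V : Finset Atom} :
    sat V (reduct (canonQ A Mod) I) ↔ V ∩ Aᶜ ∈ Mod (I ∩ Aᶜ) := by
  have key : ∀ M : Finset Atom, M ⊆ Aᶜ →
      (satRule V ⟨Aᶜ \ M, M, ∅, ∅⟩ ↔ M ≠ V ∩ Aᶜ) := by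
    intro M hM
    unfold satRule
    simp only [Finset.union_empty]
    constructor
    · rintro (⟨a, ha⟩ | hns) rfl
      · rw [Finset.mem_inter, Finset.mem_sdiff] at ha
        exact ha.1.2 (Finset.mem_inter.mpr ⟨ha.2, ha.1.1⟩)
      · exact hns Finset.inter_subset_left
    · intro hne
      by_contra hcon
      push_neg at hcon
      apply hne
      apply le_antisymm (Finset.subset_inter hcon.2 hM)
      intro a ha
      rw [Finset.mem_inter] at ha
      by_contra haM
      have : a ∈ (Aᶜ \ M) ∩ V := Finset.mem_inter.mpr ⟨Finset.mem_sdiff.mpr ⟨ha.2, haM⟩, ha.1⟩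
      rw [hcon.1] at this
      exact absurd this (Finset.notMem_empty a)
  constructor
  · intro hs
    by_contra hnm
    have hmem := reduct_canonQ_mem.mpr ⟨V ∩ Aᶜ, Finset.inter_subset_right, hnm, rfl⟩
    exact (key _ Finset.inter_subset_right).mp (hs _ hmem) rfl
  · intro hm r' hr'
    obtain ⟨M, hM, hnm, rfl⟩ := reduct_canonQ_mem.mp hr'
    exact (key M hM).mpr (fun h => hnm (h ▸ hm))

lemma inter_compl_eq_sdiff {A Y : Finset Atom} : Y ∩ Aᶜ = Y \ A := by
  ext a; simp [Finset.mem_compl, Finset.mem_sdiff, Finset.mem_inter]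

lemma sdiff_eq_self_of_subset_compl {A T : Finset Atom} (h : T ⊆ Aᶜ) : T \ A = T := by
  rw [Finset.sdiff_eq_self_iff_disjoint, Finset.disjoint_left]
  intro a ha; simpa using h ha

lemma inter_eq_empty_of_subset_compl {A T : Finset Atom} (h : T ⊆ Aᶜ) : T ∩ A = ∅ := by
  ext a; simp only [Finset.mem_inter, Finset.notMem_empty, iff_false, not_and]
  intro ha; simpa using h ha

lemma sdiff_inter_compl {A X : Finset Atom} : (X \ A) ∩ Aᶜ = X ∩ Aᶜ := by
  ext a
  simp only [Finset.mem_inter, Finset.mem_sdiff, Finset.mem_compl]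
  tauto

lemma progOver_union {T₁ T₂ : ASPProgram Atom} {S : Finset Atom}
    (h1 : progOver T₁ S) (h2 : progOver T₂ S) : progOver (T₁ ∪ T₂) S := by
  intro r hr
  rcases Finset.mem_union.mp hr with hr | hr
  exacts [h1 r hr, h2 r hr]

theorem stmt7_aux {Atom : Type} [DecidableEq Atom] [Fintype Atom]
    (P : ASPProgram Atom) (A B : Finset Atom)
    (h1 : DeltaR P A B) (h2 : ¬ OmegaCrit P A B) :
    ∃ Q : ASPProgram Atom, progOver Q Aᶜ ∧ SimpEq P A B Q := by
  classical
  have hleast : ∀ Z : Finset Atom, Z ⊆ Aᶜ → (RFam P A B Z).Nonempty →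
      ∃ S ∈ RFam P A B Z, ∀ T ∈ RFam P A B Z, S ⊆ T := by
    intro Z hZ hne
    by_contra hno
    exact h2 ⟨Z, hZ, hne, hno⟩
  set Mod : Finset Atom → Set (Finset Atom) := fun Z =>
    if h : Z ⊆ Aᶜ ∧ (RFam P A B Z).Nonempty then (hleast Z h.1 h.2).choose else ∅ with hModDef
  have hModSpec : ∀ Z : Finset Atom, Z ⊆ Aᶜ → (RFam P A B Z).Nonempty →
      Mod Z ∈ RFam P A B Z ∧ ∀ T ∈ RFam P A B Z, Mod Z ⊆ T := by
    intro Z hZ hne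
    have h : Z ⊆ Aᶜ ∧ (RFam P A B Z).Nonempty := ⟨hZ, hne⟩
    rw [hModDef]
    simp only [dif_pos h]
    obtain ⟨hS, hle⟩ := (hleast Z h.1 h.2).choose_spec
    exact ⟨hS, hle⟩
  have hModEmpty : ∀ Z : Finset Atom, ¬(Z ⊆ Aᶜ ∧ (RFam P A B Z).Nonempty) → Mod Z = ∅ := by
    intro Z h; rw [hModDef]; simp only [dif_neg h]
  refine ⟨canonQ A Mod, progOver_canonQ, ?_⟩
  intro R hRB hsep
  obtain ⟨R₁, R₂, rfl, hR1, hR2⟩ := hsep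
  have hR1B : progOver R₁ B := fun r hr => hRB r (Finset.mem_union_left _ hr)
  have hR2B : progOver R₂ B := fun r hr => hRB r (Finset.mem_union_right _ hr)
  by_cases hbot : ∃ r ∈ R₁ ∪ R₂, r.head = ∅ ∧ r.neg = ∅ ∧ r.pos ∪ r.nneg ⊆ A
  -- ⊥-case: both sides empty
  · obtain ⟨r₀, hr₀, hh, hn, hpn⟩ := hbot
    have hLHS : AS (P ∪ (R₁ ∪ R₂)) = ∅ := by
      ext Y
      simp only [Set.mem_empty_iff_false, iff_false]
      intro hY
      obtain ⟨hYY, hYR, _⟩ := (lemA hRB Y).mp hY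
      have hABY : A ∩ B ⊆ Y := h1.1 Y hYY
      have := hYR r₀ hr₀
      unfold satRule at this
      rw [hh, hn] at this
      simp only [Finset.union_empty, Finset.empty_inter, Finset.not_nonempty_empty,
        false_or, Finset.empty_union] at this
      apply this
      intro a ha
      rcases Finset.mem_union.mp ha with ha' | ha'
      · exact hABY (Finset.mem_inter.mpr ⟨hpn (Finset.mem_union_left _ ha'),
          (hRB r₀ hr₀).2.1 ha'⟩)
      · exact hABY (Finset.mem_inter.mpr ⟨hpn (Finset.mem_union_right _ ha'),
          (hRB r₀ hr₀).2.2.2 ha'⟩)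
    have hbotmem : (⟨∅, ∅, ∅, ∅⟩ : ASPRule Atom) ∈ projAway (R₁ ∪ R₂) A := by
      unfold projAway
      rw [Finset.mem_image]
      refine ⟨r₀, Finset.mem_filter.mpr ⟨hr₀, by rw [hn]; exact Finset.empty_inter A,
        by rw [hh]; exact Finset.empty_inter A⟩, ?_⟩
      rw [hh, hn]
      have hp : r₀.pos \ A = ∅ := Finset.sdiff_eq_empty_iff_subset.mpr
        (fun a ha => hpn (Finset.mem_union_left _ ha))
      have hnn : r₀.nneg \ A = ∅ := Finset.sdiff_eq_empty_iff_subset.mpr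
        (fun a ha => hpn (Finset.mem_union_right _ ha))
      rw [hp, hnn]
    have hRHS : AS (canonQ A Mod ∪ projAway (R₁ ∪ R₂) A) = ∅ := by
      ext I
      simp only [Set.mem_empty_iff_false, iff_false]
      intro hI
      have hsatI : sat I (canonQ A Mod ∪ projAway (R₁ ∪ R₂) A) := sat_reduct_self.mp hI.1
      have := hsatI _ (Finset.mem_union_right _ hbotmem)
      unfold satRule at this
      simp at this
    rw [hLHS, hRHS, Set.image_empty]
  -- main case
  · push_neg at hbot
    have hproj : projAway (R₁ ∪ R₂) A = R₁ := by
      ext r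
      unfold projAway
      rw [Finset.mem_image]
      constructor
      · rintro ⟨s, hs, rfl⟩
        obtain ⟨hsmem, hsneg, hshead⟩ := Finset.mem_filter.mp hs
        rcases Finset.mem_union.mp hsmem with hs1 | hs2
        · obtain ⟨_, hp, hn, hnn⟩ := hR1 s hs1
          rw [sdiff_eq_self_of_subset_compl hp, sdiff_eq_self_of_subset_compl hnn]
          exact hs1
        · exfalso
          obtain ⟨hh, hp, hn, hnn⟩ := hR2 s hs2
          have hhead : s.head = ∅ := (Finset.inter_eq_left.mpr hh).symm.trans hshead
          have hneg : s.neg = ∅ := (Finset.inter_eq_left.mpr hn).symm.trans hsneg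
          exact hbot s hsmem hhead hneg (Finset.union_subset hp hnn)
      · intro hr
        obtain ⟨_, hp, hn, hnn⟩ := hR1 r hr
        refine ⟨r, Finset.mem_filter.mpr ⟨Finset.mem_union_left _ hr,
          inter_eq_empty_of_subset_compl hn, inter_eq_empty_of_subset_compl (hR1 r hr).1⟩, ?_⟩
        rw [sdiff_eq_self_of_subset_compl hp, sdiff_eq_self_of_subset_compl hnn]
    rw [hproj]
    -- characterization of answer sets of P ∪ (R₁ ∪ R₂)
    have hchar1 : ∀ Y : Finset Atom, Y ∈ AS (P ∪ (R₁ ∪ R₂)) ↔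
        (Y, Y) ∈ SEB B P ∧ sat Y R₁ ∧
        ∀ X, (X, Y) ∈ SEB B P → X ⊂ Y ∩ B → ¬ sat X (reduct R₁ Y) := by
      intro Y
      rw [lemA hRB]
      constructor
      · rintro ⟨hYY, hYR, hnobad⟩
        refine ⟨hYY, sat_anti Finset.subset_union_left hYR, ?_⟩
        intro X hX hss hsatX
        obtain ⟨hhat, hhss, hhdA⟩ := hatLemma h1 hYY hX hss
        apply hnobad _ hhat hhss
        rw [reduct_union, sat_union]
        constructor
        · refine (sat_congr (progOver_reduct hR1) ?_).mp hsatX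
          ext a
          simp only [Finset.mem_inter, Finset.mem_union, Finset.mem_compl]
          tauto
        · intro r' hr'
          obtain ⟨r, hr, hrneg, hrnneg, rfl⟩ := mem_reduct.mp hr'
          have hrA := hR2 r hr
          have hrB := hR2B r hr
          have hABY : A ∩ B ⊆ Y := h1.1 Y hYY
          have hnege : r.neg = ∅ := by
            by_contra hne
            obtain ⟨a, ha⟩ := Finset.nonempty_iff_ne_empty.mpr hne
            have hmem : a ∈ r.neg ∩ Y := Finset.mem_inter.mpr ⟨ha,
              hABY (Finset.mem_inter.mpr ⟨hrA.2.2.1 ha, hrB.2.2.1 ha⟩)⟩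
            rw [hrneg] at hmem
            exact absurd hmem (Finset.notMem_empty a)
          have hheadne : r.head ≠ ∅ := by
            intro hhe
            exact hbot r (Finset.mem_union_right _ hr) hhe hnege
              (Finset.union_subset hrA.2.1 hrA.2.2.2)
          obtain ⟨a, ha⟩ := Finset.nonempty_iff_ne_empty.mpr hheadne
          refine Or.inl ⟨a, Finset.mem_inter.mpr ⟨Finset.mem_union_left _ ha, ?_⟩⟩
          exact Finset.mem_union_right _ (Finset.mem_inter.mpr ⟨hrA.1 ha, hrB.1 ha⟩)
      · rintro ⟨hYY, hYR1, hnobad⟩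
        have hABY : A ∩ B ⊆ Y := h1.1 Y hYY
        refine ⟨hYY, ?_, ?_⟩
        · rw [sat_union]
          refine ⟨hYR1, ?_⟩
          intro r hr
          have hrA := hR2 r hr
          have hrB := hR2B r hr
          by_cases hhe : r.head = ∅
          · have hnne : r.neg ≠ ∅ := by
              intro hne
              exact hbot r (Finset.mem_union_right _ hr) hhe hne
                (Finset.union_subset hrA.2.1 hrA.2.2.2)
            obtain ⟨a, ha⟩ := Finset.nonempty_iff_ne_empty.mpr hnne
            exact Or.inl ⟨a, Finset.mem_inter.mpr ⟨Finset.mem_union_right _ ha,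
              hABY (Finset.mem_inter.mpr ⟨hrA.2.2.1 ha, hrB.2.2.1 ha⟩)⟩⟩
          · obtain ⟨a, ha⟩ := Finset.nonempty_iff_ne_empty.mpr hhe
            exact Or.inl ⟨a, Finset.mem_inter.mpr ⟨Finset.mem_union_left _ ha,
              hABY (Finset.mem_inter.mpr ⟨hrA.1 ha, hrB.1 ha⟩)⟩⟩
        · intro X hX hss hsatX
          exact hnobad X hX hss (sat_anti (reduct_mono Finset.subset_union_left) hsatX)
    have hQR1over : progOver (canonQ A Mod ∪ R₁) Aᶜ := progOver_union progOver_canonQ hR1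
    have hchar2 : ∀ Z : Finset Atom, Z ⊆ Aᶜ →
        (Z ∈ AS (canonQ A Mod ∪ R₁) ↔
          Z ∈ Mod Z ∧ sat Z R₁ ∧ ∀ J ⊂ Z, ¬(J ∈ Mod Z ∧ sat J (reduct R₁ Z))) := by
      intro Z hZ
      have hZc : Z ∩ Aᶜ = Z := Finset.inter_eq_left.mpr hZ
      constructor
      · rintro ⟨hsat, hmin⟩
        rw [reduct_union, sat_union] at hsat
        have hZM : Z ∈ Mod Z := by
          have := sat_reduct_canonQ.mp hsat.1
          rwa [hZc] at this
        refine ⟨hZM, sat_reduct_self.mp hsat.2, ?_⟩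
        rintro J hJ ⟨hJM, hJsat⟩
        apply hmin J hJ
        rw [reduct_union, sat_union]
        refine ⟨sat_reduct_canonQ.mpr ?_, hJsat⟩
        rw [hZc, Finset.inter_eq_left.mpr (hJ.subset.trans hZ)]
        exact hJM
      · rintro ⟨hZM, hZR1, hmin⟩
        constructor
        · rw [reduct_union, sat_union]
          exact ⟨sat_reduct_canonQ.mpr (by rw [hZc]; exact hZM), sat_reduct_self.mpr hZR1⟩
        · intro J hJ hsatJ
          rw [reduct_union, sat_union] at hsatJ
          refine hmin J hJ ⟨?_, hsatJ.2⟩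
          have := sat_reduct_canonQ.mp hsatJ.1
          rwa [hZc, Finset.inter_eq_left.mpr (hJ.subset.trans hZ)] at this
    apply Set.ext
    intro Z₀
    simp only [Set.mem_image]
    constructor
    · rintro ⟨Y, hYAS, rfl⟩
      obtain ⟨hYY, hYR1, hProp⟩ := (hchar1 Y).mp hYAS
      set Z := Y \ A with hZdef
      have hZc : Z ⊆ Aᶜ := fun a ha => Finset.mem_compl.mpr (Finset.mem_sdiff.mp ha).2
      have hYZ : Y ∩ Aᶜ = Z ∩ Aᶜ := by
        rw [inter_compl_eq_sdiff, ← hZdef, Finset.inter_eq_left.mpr hZc]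
      have hSY : {W | ∃ X, (X, Y) ∈ SEB B P ∧ W = X \ A} ∈ RFam P A B Z := mem_RFam_self hYY
      have hne : (RFam P A B Z).Nonempty := ⟨_, hSY⟩
      obtain ⟨hS₀mem, hS₀least⟩ := hModSpec Z hZc hne
      have hZA : Z ∩ A = ∅ := inter_eq_empty_of_subset_compl hZc
      obtain ⟨hZin, hWsub⟩ := RFam_elem hZA hS₀mem
      refine (hchar2 Z hZc).mpr ⟨hZin, ?_, ?_⟩
      · exact (sat_congr hR1 hYZ).mp hYR1
      · rintro J hJ ⟨hJM, hJsat⟩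
        have hJS : J ∈ {W | ∃ X, (X, Y) ∈ SEB B P ∧ W = X \ A} := hS₀least _ hSY hJM
        obtain ⟨X, hX, rfl⟩ := hJS
        rcases (mem_SEB.mp hX).1 with rfl | hss
        · exact hJ.ne hZdef.symm
        · apply hProp X hX hss
          rw [reduct_congr hR1 hYZ]
          exact (sat_congr (progOver_reduct hR1) sdiff_inter_compl).mp hJsat
    · intro hZAS
      have hZc : Z₀ ⊆ Aᶜ := AS_sub hQR1over hZAS
      obtain ⟨hZM, hZR1, hmin⟩ := (hchar2 Z₀ hZc).mp hZAS
      have hgood : (RFam P A B Z₀).Nonempty := by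
        by_contra hng
        rw [hModEmpty Z₀ (fun h => hng h.2)] at hZM
        exact hZM
      obtain ⟨hS₀mem, hS₀least⟩ := hModSpec Z₀ hZc hgood
      have hZA : Z₀ ∩ A = ∅ := inter_eq_empty_of_subset_compl hZc
      obtain ⟨A', hA'A, htot, hSeq⟩ := hS₀mem
      have hYdA : (Z₀ ∪ A') \ A = Z₀ := by
        rw [Finset.union_sdiff_distrib, Finset.sdiff_eq_empty_iff_subset.mpr hA'A,
          Finset.union_empty, sdiff_eq_self_of_subset_compl hZc]
      have hYZ : (Z₀ ∪ A') ∩ Aᶜ = Z₀ ∩ Aᶜ := by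
        rw [inter_compl_eq_sdiff, hYdA, Finset.inter_eq_left.mpr hZc]
      refine ⟨Z₀ ∪ A', (hchar1 _).mpr ⟨htot, (sat_congr hR1 hYZ).mpr hZR1, ?_⟩, hYdA⟩
      intro X hX hss hsatX
      have hW : X \ A ∈ Mod Z₀ := by rw [hSeq]; exact ⟨X, hX, rfl⟩
      have hWne : X \ A ≠ Z₀ := by
        have := noSelf h1 htot hX hss
        rwa [hYdA] at this
      have hWsub : X \ A ⊆ Z₀ := (RFam_elem hZA ⟨A', hA'A, htot, hSeq⟩).2 _ hW
      refine hmin (X \ A) (lt_of_le_of_ne hWsub hWne) ⟨hW, ?_⟩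
      rw [← reduct_congr hR1 hYZ]
      exact (sat_congr (progOver_reduct hR1) sdiff_inter_compl.symm).mp hsatX



/-- `Δʳ` together with the failure of `Ω_{A,B}` implies that `P` is
`B`-relativized `A`-simplifiable. -/
theorem stmt7 {Atom : Type} [DecidableEq Atom] [Fintype Atom]
    (P : ASPProgram Atom) (A B : Finset Atom)
    (h1 : DeltaR P A B) (h2 : ¬ OmegaCrit P A B) :
    ∃ Q : ASPProgram Atom, progOver Q Aᶜ ∧ SimpEq P A B Q := by
  exact stmt7_aux P A B h1 h2
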